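/- Let {S_1, …, S_m} be a partition of {1, …, n} with m ≥ 2, and let f = Σ_{i=1}^m ∏_{j∈S_i} x_j in K[x_1, …, x_n] over an algebraically closed field K. Then for every weight vector w ∈ R^n, the initial form In_w(f) (the sum of terms of f whose w-weight is minimal) is an irreducible polynomial whenever it has at least two terms, and in particular every initial ideal In_w(⟨f⟩) containing no monomial is prime. -/

import Mathlib

open MvPolynomial

/-- The weight `w · α` of an exponent vector. -/
noncomputable def wt {n : ℕ} (w : Fin n → ℝ) (α : Fin n →₀ ℕ) : ℝ :=
  ∑ j, w j * (α j : ℝ)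

/-- The initial form of a polynomial: the sum of its terms of minimal `w`-weight. -/
noncomputable def initialForm {K : Type*} [CommSemiring K] {n : ℕ} (w : Fin n → ℝ)
    (f : MvPolynomial (Fin n) K) : MvPolynomial (Fin n) K :=
  ∑ α ∈ f.support.filter (fun α => ∀ β ∈ f.support, wt w α ≤ wt w β),
    monomial α (coeff α f)

/-- The initial ideal `In_w(I)`. -/
noncomputable def initialIdeal {K : Type*} [CommSemiring K] {n : ℕ} (w : Fin n → ℝ)
    (I : Ideal (MvPolynomial (Fin n) K)) : Ideal (MvPolynomial (Fin n) K) :=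
  Ideal.span (initialForm w '' (I : Set (MvPolynomial (Fin n) K)))

section Infra
variable {K : Type*} [Field K] {n : ℕ} (w : Fin n → ℝ)

lemma wt_add (α β : Fin n →₀ ℕ) : wt w (α + β) = wt w α + wt w β := by
  simp only [wt, Finsupp.add_apply]
  rw [← Finset.sum_add_distrib]
  congr 1; ext j; push_cast; ring

lemma coeff_initialForm (f : MvPolynomial (Fin n) K) (β : Fin n →₀ ℕ) :
    coeff β (initialForm w f) =
      if β ∈ f.support.filter (fun α => ∀ γ ∈ f.support, wt w α ≤ wt w γ) then coeff β f
      else 0 := by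
  classical
  rw [initialForm]
  rw [coeff_sum]
  simp_rw [coeff_monomial]
  rw [Finset.sum_ite_eq']

lemma support_initialForm (f : MvPolynomial (Fin n) K) :
    (initialForm w f).support =
      f.support.filter (fun α => ∀ γ ∈ f.support, wt w α ≤ wt w γ) := by
  ext β
  rw [mem_support_iff, coeff_initialForm]
  constructor
  · intro h
    by_contra hb
    simp [hb] at h
  · intro h
    rw [if_pos h]
    exact mem_support_iff.mp (Finset.mem_filter.mp h).1

end Infra

section Infra2
variable {K : Type*} [Field K] {n : ℕ} (w : Fin n → ℝ)

lemma initialForm_add_eq (p q : MvPolynomial (Fin n) K) (c : ℝ) (hp : p ≠ 0)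
    (hpc : ∀ α ∈ p.support, wt w α = c) (hqc : ∀ α ∈ q.support, c < wt w α) :
    initialForm w (p + q) = p := by
  classical
  have hq0 : ∀ β ∈ p.support, coeff β q = 0 := by
    intro β hb
    by_contra hc
    exact absurd (hqc β (mem_support_iff.mpr hc)) (by rw [hpc β hb]; exact lt_irrefl _)
  have hp0 : ∀ β ∈ q.support, coeff β p = 0 := by
    intro β hb
    by_contra hc
    exact absurd (hqc β hb) (by rw [hpc β (mem_support_iff.mpr hc)]; exact lt_irrefl _)
  have hsupp : (p + q).support = p.support ∪ q.support := by
    ext β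
    simp only [mem_support_iff, coeff_add, Finset.mem_union]
    by_cases h1 : coeff β p = 0 <;> by_cases h2 : coeff β q = 0 <;> simp [h1, h2]
    exact absurd (hq0 β (mem_support_iff.mpr h1)) h2
  obtain ⟨α0, hα0⟩ := support_nonempty.mpr hp
  have hfilter : (p + q).support.filter
      (fun α => ∀ γ ∈ (p + q).support, wt w α ≤ wt w γ) = p.support := by
    ext β
    simp only [Finset.mem_filter, hsupp, Finset.mem_union]
    constructor
    · rintro ⟨hβ | hβ, hmin⟩
      · exact hβ
      · exact absurd (hmin α0 (Or.inl hα0)) (by rw [hpc α0 hα0]; exact not_le.mpr (hqc β hβ))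
    · intro hβ
      refine ⟨Or.inl hβ, ?_⟩
      rintro γ (hγ | hγ)
      · rw [hpc β hβ, hpc γ hγ]
      · rw [hpc β hβ]; exact le_of_lt (hqc γ hγ)
  rw [initialForm, hfilter]
  have : ∀ β ∈ p.support, monomial β (coeff β (p + q)) = monomial β (coeff β p) := by
    intro β hβ
    rw [coeff_add, hq0 β hβ, add_zero]
  rw [Finset.sum_congr rfl this, support_sum_monomial_coeff]

lemma initialForm_zero : initialForm w (0 : MvPolynomial (Fin n) K) = 0 := by
  simp [initialForm]

lemma initialForm_ne_zero {p : MvPolynomial (Fin n) K} (hp : p ≠ 0) :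
    initialForm w p ≠ 0 := by
  obtain ⟨α0, hα0, hmin⟩ := p.support.exists_min_image (wt w) (support_nonempty.mpr hp)
  intro h
  have : α0 ∈ (initialForm w p).support := by
    rw [support_initialForm, Finset.mem_filter]
    exact ⟨hα0, hmin⟩
  rw [h] at this
  simp at this

lemma wt_eq_on_initialForm {p : MvPolynomial (Fin n) K} {α0 : Fin n →₀ ℕ}
    (hα0 : α0 ∈ p.support) (hmin : ∀ β ∈ p.support, wt w α0 ≤ wt w β) :
    ∀ α ∈ (initialForm w p).support, wt w α = wt w α0 := by
  intro α hα
  rw [support_initialForm, Finset.mem_filter] at hα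
  exact le_antisymm (hα.2 α0 hα0) (hmin α hα.1)

lemma wt_gt_on_rest {p : MvPolynomial (Fin n) K} {α0 : Fin n →₀ ℕ}
    (hα0 : α0 ∈ p.support) (hmin : ∀ β ∈ p.support, wt w α0 ≤ wt w β) :
    ∀ α ∈ (p - initialForm w p).support, wt w α0 < wt w α := by
  intro α hα
  rw [mem_support_iff] at hα
  have hco : coeff α (p - initialForm w p) = coeff α p - coeff α (initialForm w p) := by
    simp [coeff_sub]
  rw [hco, coeff_initialForm] at hα
  by_cases hmem : α ∈ p.support.filter (fun a => ∀ γ ∈ p.support, wt w a ≤ wt w γ)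
  · rw [if_pos hmem] at hα; simp at hα
  · rw [if_neg hmem, sub_zero] at hα
    have hαs : α ∈ p.support := mem_support_iff.mpr hα
    rw [Finset.mem_filter, not_and] at hmem
    obtain ⟨γ, hγ, hlt⟩ := by
      have := hmem hαs
      push_neg at this
      exact this
    exact lt_of_le_of_lt (hmin γ hγ) hlt

lemma mul_support_wt_lt {s t : MvPolynomial (Fin n) K} {cs ct : ℝ}
    (hs : ∀ α ∈ s.support, cs ≤ wt w α) (ht : ∀ α ∈ t.support, ct < wt w α) :
    ∀ α ∈ (s * t).support, cs + ct < wt w α := by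
  intro α hα
  have := support_mul s t hα
  rw [Finset.mem_add] at this
  obtain ⟨u, hu, v, hv, rfl⟩ := this
  rw [wt_add]
  exact add_lt_add_of_le_of_lt (hs u hu) (ht v hv)

lemma mul_support_wt_eq {s t : MvPolynomial (Fin n) K} {cs ct : ℝ}
    (hs : ∀ α ∈ s.support, wt w α = cs) (ht : ∀ α ∈ t.support, wt w α = ct) :
    ∀ α ∈ (s * t).support, wt w α = cs + ct := by
  intro α hα
  have := support_mul s t hα
  rw [Finset.mem_add] at this
  obtain ⟨u, hu, v, hv, rfl⟩ := this
  rw [wt_add, hs u hu, ht v hv]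

lemma initialForm_mul (p q : MvPolynomial (Fin n) K) (hp : p ≠ 0) (hq : q ≠ 0) :
    initialForm w (p * q) = initialForm w p * initialForm w q := by
  classical
  obtain ⟨α0, hα0, hminp⟩ := p.support.exists_min_image (wt w) (support_nonempty.mpr hp)
  obtain ⟨β0, hβ0, hminq⟩ := q.support.exists_min_image (wt w) (support_nonempty.mpr hq)
  set P := initialForm w p with hP
  set Q := initialForm w q with hQ
  set Rp := p - P with hRp
  set Rq := q - Q with hRq
  have hpq : p * q = P * Q + (P * Rq + Rp * Q + Rp * Rq) := by
    have h1 : p = P + Rp := by rw [hRp]; ring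
    have h2 : q = Q + Rq := by rw [hRq]; ring
    rw [h1, h2]; ring
  have hPwt := wt_eq_on_initialForm w hα0 hminp
  have hQwt := wt_eq_on_initialForm w hβ0 hminq
  have hRpwt := wt_gt_on_rest w hα0 hminp
  have hRqwt := wt_gt_on_rest w hβ0 hminq
  rw [hpq]
  apply initialForm_add_eq w _ _ (wt w α0 + wt w β0)
  · exact mul_ne_zero (initialForm_ne_zero w hp) (initialForm_ne_zero w hq)
  · exact mul_support_wt_eq w hPwt hQwt
  · intro α hα
    rcases Finset.mem_union.mp (Finset.mem_of_subset (support_add) hα) with h | h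
    rcases Finset.mem_union.mp (Finset.mem_of_subset (support_add) h) with h' | h'
    · exact mul_support_wt_lt w (fun u hu => le_of_eq (hPwt u hu).symm) hRqwt α h'
    · rw [mul_comm] at h'
      have := mul_support_wt_lt w (fun u hu => le_of_eq (hQwt u hu).symm) hRpwt α h'
      linarith
    · exact mul_support_wt_lt w (fun u hu => le_of_lt (hRpwt u hu)) hRqwt α h

end Infra2



section Infra3
variable {K : Type*} [Field K] {n : ℕ} (w : Fin n → ℝ)

lemma initialIdeal_span_singleton (f : MvPolynomial (Fin n) K) (hf : f ≠ 0) :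
    initialIdeal w (Ideal.span {f}) = Ideal.span {initialForm w f} := by
  apply le_antisymm
  · rw [initialIdeal, Ideal.span_le]
    rintro _ ⟨g, hg, rfl⟩
    obtain ⟨h, rfl⟩ := Ideal.mem_span_singleton.mp hg
    by_cases hh : h = 0
    · subst hh
      simp [initialForm_zero]
    · rw [initialForm_mul w f h hf hh]
      exact Ideal.mem_span_singleton.mpr (Dvd.intro _ rfl)
  · rw [Ideal.span_le, Set.singleton_subset_iff]
    exact Ideal.subset_span ⟨f, Ideal.mem_span_singleton_self f, rfl⟩

/-- Substitution `X k ↦ 0`. -/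
noncomputable def ev0 (k : Fin n) : MvPolynomial (Fin n) K →ₐ[K] MvPolynomial (Fin n) K :=
  aeval (fun t => if t = k then 0 else X t)

lemma X_dvd_iff_supp {k : Fin n} {p : MvPolynomial (Fin n) K} :
    X k ∣ p ↔ ∀ α ∈ p.support, α k ≠ 0 := by
  rw [X_dvd_iff_modMonomial_eq_zero]
  constructor
  · intro h α hα
    intro h0
    have : coeff α (p.modMonomial (Finsupp.single k 1)) = coeff α p := by
      apply coeff_modMonomial_of_not_le
      intro hle
      have := hle k
      simp [h0] at this
    rw [h] at this
    exact (mem_support_iff.mp hα) this.symm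
  · intro h
    ext α
    by_cases hle : Finsupp.single k 1 ≤ α
    · rw [coeff_modMonomial_of_le _ hle, coeff_zero]
    · rw [coeff_modMonomial_of_not_le _ hle, coeff_zero]
      by_contra hc
      apply hle
      have := h α (mem_support_iff.mpr hc)
      intro t
      rcases eq_or_ne t k with rfl | ht
      · simpa [Finsupp.single_apply, Nat.one_le_iff_ne_zero] using this
      · simp [Finsupp.single_apply, ht.symm]

end Infra3

section Infra4
variable {K : Type*} [Field K] {n : ℕ}

lemma ev0_monomial (k : Fin n) (α : Fin n →₀ ℕ) (c : K) :
    (ev0 k : MvPolynomial (Fin n) K →ₐ[K] MvPolynomial (Fin n) K) (monomial α c) =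
      if α k = 0 then monomial α c else 0 := by
  classical
  rw [ev0, aeval_monomial]
  by_cases h : α k = 0
  · rw [if_pos h]
    have : (α.prod fun t e => (if t = k then 0 else X t) ^ e) =
        α.prod fun t e => (X t : MvPolynomial (Fin n) K) ^ e := by
      apply Finsupp.prod_congr
      intro t ht
      have : t ≠ k := by rintro rfl; exact (Finsupp.mem_support_iff.mp ht) h
      rw [if_neg this]
    rw [this, algebraMap_eq, ← monomial_eq]
  · rw [if_neg h]
    have hk : k ∈ α.support := Finsupp.mem_support_iff.mpr h
    rw [Finsupp.prod]
    rw [Finset.prod_eq_zero hk (by simp [zero_pow h])]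
    ring

lemma ev0_eq_zero_iff (k : Fin n) (p : MvPolynomial (Fin n) K) :
    (ev0 k : MvPolynomial (Fin n) K →ₐ[K] MvPolynomial (Fin n) K) p = 0 ↔ X k ∣ p := by
  classical
  constructor
  · intro h
    rw [X_dvd_iff_supp]
    intro α hα hαk
    have hrepr : (ev0 k : MvPolynomial (Fin n) K →ₐ[K] MvPolynomial (Fin n) K) p =
        ∑ β ∈ p.support.filter (fun β => β k = 0), monomial β (coeff β p) := by
      conv_lhs => rw [← support_sum_monomial_coeff p]
      rw [map_sum]
      rw [Finset.sum_filter]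
      apply Finset.sum_congr rfl
      intro β _
      rw [ev0_monomial]
    have hc : coeff α ((ev0 k : MvPolynomial (Fin n) K →ₐ[K] MvPolynomial (Fin n) K) p)
        = coeff α p := by
      rw [hrepr, coeff_sum]
      simp_rw [coeff_monomial]
      rw [Finset.sum_ite_eq']
      rw [if_pos (Finset.mem_filter.mpr ⟨hα, hαk⟩)]
    rw [h, coeff_zero] at hc
    exact (mem_support_iff.mp hα) hc.symm
  · rintro ⟨q, rfl⟩
    rw [map_mul]
    have : (ev0 k : MvPolynomial (Fin n) K →ₐ[K] MvPolynomial (Fin n) K) (X k) = 0 := by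
      simp [ev0]
    rw [this, zero_mul]

lemma prime_X' (k : Fin n) : Prime (X k : MvPolynomial (Fin n) K) := by
  refine ⟨X_ne_zero k, ?_, ?_⟩
  · intro hu
    have := hu.map (ev0 k : MvPolynomial (Fin n) K →ₐ[K] MvPolynomial (Fin n) K)
    have h0 : (ev0 k : MvPolynomial (Fin n) K →ₐ[K] MvPolynomial (Fin n) K) (X k) = 0 := by
      simp [ev0]
    rw [h0] at this
    exact zero_ne_one (isUnit_zero_iff.mp this)
  · intro a b hab
    rw [← ev0_eq_zero_iff] at hab ⊢
    rw [← ev0_eq_zero_iff (p := b)]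
    rw [map_mul] at hab
    exact mul_eq_zero.mp hab

lemma isRelPrime_of_prime_not_dvd {R : Type*} [CommMonoidWithZero R] [IsCancelMulZero R] {p b : R}
    (hp : Prime p) (hnd : ¬ p ∣ b) : IsRelPrime p b := by
  intro d hdp hdb
  obtain ⟨e, he⟩ := hdp
  rcases hp.irreducible.isUnit_or_isUnit he with h | h
  · exact h
  · exfalso
    apply hnd
    obtain ⟨u, rfl⟩ := h
    have : p ∣ d := ⟨↑u⁻¹, by rw [he, Units.mul_inv_cancel_right]⟩
    exact this.trans hdb

end Infra4

section Infra5
variable {K : Type*} [Field K] {n : ℕ}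

/-- Substitution viewing `X k` as the polynomial variable. -/
noncomputable def psi (k : Fin n) :
    MvPolynomial (Fin n) K →ₐ[K] Polynomial (MvPolynomial (Fin n) K) :=
  aeval (fun t => if t = k then (Polynomial.X : Polynomial (MvPolynomial (Fin n) K))
    else Polynomial.C (X t))

lemma chi_psi (k : Fin n) (p : MvPolynomial (Fin n) K) :
    Polynomial.aeval (X k : MvPolynomial (Fin n) K) (psi k p) = p := by
  classical
  induction p using MvPolynomial.induction_on with
  | C c => simp [psi]
  | add p q hp hq => simp [map_add, hp, hq]
  | mul_X p j hp =>
    rw [map_mul, map_mul, hp]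
    congr 1
    by_cases hj : j = k
    · subst hj; simp [psi]
    · simp [psi, hj]

lemma psi_injective (k : Fin n) :
    Function.Injective (psi (K := K) k) := by
  intro a b h
  have := congrArg (Polynomial.aeval (X k : MvPolynomial (Fin n) K)) h
  rwa [chi_psi, chi_psi] at this

lemma prod_X_eq_monomial (s : Finset (Fin n)) :
    (∏ j ∈ s, (X j : MvPolynomial (Fin n) K)) =
      monomial (∑ j ∈ s, Finsupp.single j 1) 1 := by
  classical
  induction s using Finset.induction_on with
  | empty => simp
  | insert _ _ hj ih =>
    rw [Finset.prod_insert hj, Finset.sum_insert hj, ih]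
    rw [X, monomial_mul, one_mul]

lemma indicator_apply (s : Finset (Fin n)) (t : Fin n) :
    (∑ j ∈ s, Finsupp.single j 1 : Fin n →₀ ℕ) t = if t ∈ s then 1 else 0 := by
  classical
  rw [Finset.sum_apply']
  simp_rw [Finsupp.single_apply]
  rw [Finset.sum_ite_eq' s t (fun _ => 1)]

end Infra5

section Irred
variable {K : Type*} [Field K] {n m : ℕ}

theorem irred_aux (S : Fin m → Finset (Fin n))
    (hdisj : ∀ i j : Fin m, i ≠ j → Disjoint (S i) (S j))
    (hne : ∀ i : Fin m, (S i).Nonempty)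
    (T : Finset (Fin m)) (hT : 2 ≤ T.card) :
    Irreducible (∑ i ∈ T, monomial (∑ j ∈ S i, Finsupp.single j 1) (1 : K)) := by
  classical
  set e : Fin m → (Fin n →₀ ℕ) := fun i => ∑ j ∈ S i, Finsupp.single j 1 with he
  set g : MvPolynomial (Fin n) K := ∑ i ∈ T, monomial (e i) 1 with hgdef
  have heinj : ∀ i i' : Fin m, e i = e i' → i = i' := by
    intro i i' hee
    by_contra hne'
    obtain ⟨k, hk⟩ := hne i
    have h1 : e i k = 1 := by rw [he]; simp only []; rw [indicator_apply, if_pos hk]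
    have h2 : e i' k = 0 := by
      rw [he]; simp only []; rw [indicator_apply, if_neg]
      exact fun hk' => Finset.disjoint_left.mp (hdisj i i' hne') hk hk'
    rw [hee, h2] at h1
    exact one_ne_zero h1.symm
  have hco : ∀ (T' : Finset (Fin m)), ∀ i ∈ T',
      coeff (e i) (∑ i' ∈ T', monomial (e i') (1 : K)) = 1 := by
    intro T' i hi
    rw [coeff_sum]
    simp_rw [coeff_monomial]
    rw [Finset.sum_eq_single i]
    · rw [if_pos rfl]
    · intro i' _ hii'
      rw [if_neg (fun h => hii' (heinj i' i h))]
    · intro h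
      exact absurd hi h
  obtain ⟨i0, hi0⟩ := Finset.card_pos.mp (by omega : 0 < T.card)
  obtain ⟨k, hk⟩ := hne i0
  have hg0 : g ≠ 0 := by
    intro h
    have := hco T i0 hi0
    rw [← hgdef, h, coeff_zero] at this
    exact zero_ne_one this
  have hgprod : g = ∑ i ∈ T, ∏ j ∈ S i, X j := by
    rw [hgdef]
    exact Finset.sum_congr rfl fun i _ => (prod_X_eq_monomial (S i)).symm
  constructor
  · -- not a unit
    intro hu
    set θ : MvPolynomial (Fin n) K →ₐ[K] Polynomial K :=
      aeval (fun t => if t ∈ S i0 then (Polynomial.X : Polynomial K) else 0) with hθ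
    have hθg : θ g = Polynomial.X ^ (S i0).card := by
      rw [hgprod, map_sum]
      rw [Finset.sum_eq_single i0]
      · rw [map_prod]
        have : ∀ j ∈ S i0, θ (X j) = Polynomial.X := by
          intro j hj
          rw [hθ]; simp [aeval_X, if_pos hj]
        rw [Finset.prod_congr rfl this, Finset.prod_const]
      · intro i _ hii0
        rw [map_prod]
        obtain ⟨j1, hj1⟩ := hne i
        apply Finset.prod_eq_zero hj1
        have : j1 ∉ S i0 := fun hj' => Finset.disjoint_left.mp (hdisj i i0 hii0) hj1 hj'
        rw [hθ]; simp [aeval_X, if_neg this]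
      · intro h; exact absurd hi0 h
    have hunit := hu.map θ
    rw [hθg] at hunit
    have := Polynomial.natDegree_eq_zero_of_isUnit hunit
    rw [Polynomial.natDegree_X_pow] at this
    exact absurd this (Finset.card_ne_zero_of_mem hk)
  · -- factorizations
    set A : MvPolynomial (Fin n) K := ∏ j ∈ (S i0).erase k, X j with hA
    set B : MvPolynomial (Fin n) K := ∑ i ∈ T.erase i0, monomial (e i) 1 with hB
    have hgAB : g = X k * A + B := by
      rw [hgdef, ← Finset.add_sum_erase _ _ hi0, ← hB]
      congr 1
      rw [← prod_X_eq_monomial, ← Finset.mul_prod_erase _ _ hk, hA]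
    have hA0 : A ≠ 0 := by
      rw [hA, Finset.prod_ne_zero_iff]
      exact fun j _ => X_ne_zero j
    have hψg : psi k g = Polynomial.C A * Polynomial.X + Polynomial.C B := by
      rw [hgAB, map_add, map_mul]
      have h1 : psi (K := K) k (X k) = Polynomial.X := by simp [psi]
      have h2 : psi (K := K) k A = Polynomial.C A := by
        rw [hA, map_prod]
        have : ∀ j ∈ (S i0).erase k, psi (K := K) k (X j) = Polynomial.C (X j) := by
          intro j hj
          have : j ≠ k := (Finset.mem_erase.mp hj).1
          simp [psi, this]
        rw [Finset.prod_congr rfl this, ← map_prod]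
      have h3 : psi (K := K) k B = Polynomial.C B := by
        rw [hB, map_sum]
        have : ∀ i ∈ T.erase i0, psi (K := K) k (monomial (e i) (1 : K)) =
            Polynomial.C (monomial (e i) 1) := by
          intro i hi
          have hii0 : i ≠ i0 := (Finset.mem_erase.mp hi).1
          rw [← prod_X_eq_monomial, map_prod]
          have : ∀ j ∈ S i, psi (K := K) k (X j) = Polynomial.C (X j) := by
            intro j hj
            have : j ≠ k := fun h => Finset.disjoint_left.mp (hdisj i i0 hii0) hj (h ▸ hk)
            simp [psi, this]
          rw [Finset.prod_congr rfl this, ← map_prod]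
        rw [Finset.sum_congr rfl this, ← map_sum]
      rw [h1, h2, h3]
      ring
    have hdeg : (psi k g).natDegree = 1 := by
      rw [hψg]
      exact Polynomial.natDegree_linear hA0
    have relAB : IsRelPrime A B := by
      rw [hA]
      apply IsRelPrime.prod_left
      intro j hj
      have hjS : j ∈ S i0 := Finset.mem_of_mem_erase hj
      apply isRelPrime_of_prime_not_dvd (prime_X' j)
      rw [X_dvd_iff_supp]
      push_neg
      have hT1 : (T.erase i0).Nonempty := by
        rw [← Finset.card_pos, Finset.card_erase_of_mem hi0]
        omega
      obtain ⟨i1, hi1⟩ := hT1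
      refine ⟨e i1, ?_, ?_⟩
      · rw [hB, mem_support_iff, hco (T.erase i0) i1 hi1]
        exact one_ne_zero
      · have hii0 : i1 ≠ i0 := (Finset.mem_erase.mp hi1).1
        rw [he]; simp only []; rw [indicator_apply, if_neg]
        exact fun hj' => Finset.disjoint_left.mp (hdisj i1 i0 hii0) hj' hjS
    have key : ∀ u v : MvPolynomial (Fin n) K, g = u * v →
        (psi k v).natDegree = 0 → IsUnit v := by
      intro u v huv hdeg0
      obtain ⟨v0, hv0⟩ := Polynomial.natDegree_eq_zero.mp hdeg0
      have hvv0 : v = v0 := by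
        have h2 := chi_psi k v
        rw [← hv0] at h2
        simpa using h2.symm
      have hmul : Polynomial.C A * Polynomial.X + Polynomial.C B =
          psi k u * Polynomial.C v0 := by
        rw [← hψg, huv, map_mul, hv0]
      have h1 : A = (psi k u).coeff 1 * v0 := by
        have := congrArg (fun P => Polynomial.coeff P 1) hmul
        simpa [Polynomial.coeff_mul_C, Polynomial.coeff_C] using this
      have h0 : B = (psi k u).coeff 0 * v0 := by
        have := congrArg (fun P => Polynomial.coeff P 0) hmul
        simpa [Polynomial.coeff_mul_C, Polynomial.coeff_C] using this
      have : IsUnit v0 :=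
        relAB (Dvd.intro_left _ h1.symm) (Dvd.intro_left _ h0.symm)
      rw [hvv0]
      exact this
    rintro u v huv
    have hu0 : u ≠ 0 := by rintro rfl; rw [zero_mul] at huv; exact hg0 huv
    have hv0 : v ≠ 0 := by rintro rfl; rw [mul_zero] at huv; exact hg0 huv
    have hψu0 : psi k u ≠ 0 := fun h => hu0 (psi_injective k (by rw [h, map_zero]))
    have hψv0 : psi k v ≠ 0 := fun h => hv0 (psi_injective k (by rw [h, map_zero]))
    have hsum : (psi k u).natDegree + (psi k v).natDegree = 1 := by
      rw [← Polynomial.natDegree_mul hψu0 hψv0, ← map_mul, ← huv, hdeg]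
    have : (psi k u).natDegree = 0 ∨ (psi k v).natDegree = 0 := by omega
    rcases this with h | h
    · exact Or.inl (key v u (by rw [huv, mul_comm]) h)
    · exact Or.inr (key u v huv h)

end Irred


/-- For `f = Σ_{i=1}^m ∏_{j ∈ S_i} x_j` with `{S_i}` a partition of `[n]` and `m ≥ 2`,
every initial form of `f` with at least two terms is irreducible, and every initial ideal
of `⟨f⟩` containing no monomial is prime. -/
theorem stmt1 {K : Type*} [Field K] [IsAlgClosed K] {n m : ℕ} (hm : 2 ≤ m)
    (S : Fin m → Finset (Fin n))
    (hdisj : ∀ i j : Fin m, i ≠ j → Disjoint (S i) (S j))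
    (hcover : ∀ k : Fin n, ∃ i : Fin m, k ∈ S i)
    (hne : ∀ i : Fin m, (S i).Nonempty)
    (f : MvPolynomial (Fin n) K)
    (hf : f = ∑ i : Fin m, ∏ j ∈ S i, (X j : MvPolynomial (Fin n) K))
    (w : Fin n → ℝ) :
    (2 ≤ (initialForm w f).support.card → Irreducible (initialForm w f)) ∧
    ((¬ ∃ α : Fin n →₀ ℕ, monomial α (1 : K) ∈ initialIdeal w (Ideal.span {f})) →
      (initialIdeal w (Ideal.span {f})).IsPrime) := by
  classical
  set e : Fin m → (Fin n →₀ ℕ) := fun i => ∑ j ∈ S i, Finsupp.single j 1 with he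
  have heinj : ∀ i i' : Fin m, e i = e i' → i = i' := by
    intro i i' hee
    by_contra hne'
    obtain ⟨k, hk⟩ := hne i
    have h1 : e i k = 1 := by rw [he]; simp only []; rw [indicator_apply, if_pos hk]
    have h2 : e i' k = 0 := by
      rw [he]; simp only []; rw [indicator_apply, if_neg]
      exact fun hk' => Finset.disjoint_left.mp (hdisj i i' hne') hk hk'
    rw [hee, h2] at h1
    exact one_ne_zero h1.symm
  have hfe : f = ∑ i : Fin m, monomial (e i) (1 : K) := by
    rw [hf]
    exact Finset.sum_congr rfl fun i _ => prod_X_eq_monomial (S i)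
  have hco : ∀ (T' : Finset (Fin m)), ∀ i ∈ T',
      coeff (e i) (∑ i' ∈ T', monomial (e i') (1 : K)) = 1 := by
    intro T' i hi
    rw [coeff_sum]
    simp_rw [coeff_monomial]
    rw [Finset.sum_eq_single i]
    · rw [if_pos rfl]
    · intro i' _ hii'
      rw [if_neg (fun h => hii' (heinj i' i h))]
    · intro h; exact absurd hi h
  have hcoeff : ∀ β, coeff β f = if β ∈ Finset.univ.image e then (1 : K) else 0 := by
    intro β
    by_cases hβ : β ∈ Finset.univ.image e
    · rw [if_pos hβ]
      obtain ⟨i, _, rfl⟩ := Finset.mem_image.mp hβ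
      rw [hfe]
      exact hco Finset.univ i (Finset.mem_univ i)
    · rw [if_neg hβ, hfe, coeff_sum]
      simp_rw [coeff_monomial]
      apply Finset.sum_eq_zero
      intro i _
      rw [if_neg]
      exact fun h => hβ (Finset.mem_image.mpr ⟨i, Finset.mem_univ i, h⟩)
  have hsuppf : f.support = Finset.univ.image e := by
    ext β
    rw [mem_support_iff, hcoeff]
    by_cases hβ : β ∈ Finset.univ.image e <;> simp [hβ]
  set T : Finset (Fin m) :=
    Finset.univ.filter (fun i => ∀ i', wt w (e i) ≤ wt w (e i')) with hT
  have hfilter : f.support.filter (fun α => ∀ γ ∈ f.support, wt w α ≤ wt w γ)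
      = T.image e := by
    ext β
    rw [Finset.mem_filter, hsuppf]
    constructor
    · rintro ⟨hβ, hmin⟩
      obtain ⟨i, _, rfl⟩ := Finset.mem_image.mp hβ
      refine Finset.mem_image.mpr ⟨i, ?_, rfl⟩
      rw [hT, Finset.mem_filter]
      refine ⟨Finset.mem_univ i, fun i' => ?_⟩
      exact hmin (e i') (Finset.mem_image.mpr ⟨i', Finset.mem_univ i', rfl⟩)
    · intro hβ
      obtain ⟨i, hiT, rfl⟩ := Finset.mem_image.mp hβ
      rw [hT, Finset.mem_filter] at hiT
      refine ⟨Finset.mem_image.mpr ⟨i, Finset.mem_univ i, rfl⟩, ?_⟩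
      intro γ hγ
      obtain ⟨i', _, rfl⟩ := Finset.mem_image.mp hγ
      exact hiT.2 i'
  have hinit : initialForm w f = ∑ i ∈ T, monomial (e i) (1 : K) := by
    rw [initialForm, hfilter]
    rw [Finset.sum_image (fun i _ i' _ h => heinj i i' h)]
    apply Finset.sum_congr rfl
    intro i _
    rw [hcoeff, if_pos (Finset.mem_image.mpr ⟨i, Finset.mem_univ i, rfl⟩)]
  have hTne : T.Nonempty := by
    have huniv : (Finset.univ : Finset (Fin m)).Nonempty :=
      ⟨⟨0, by omega⟩, Finset.mem_univ _⟩
    obtain ⟨i0, _, hmin⟩ := Finset.exists_min_image Finset.univ (fun i => wt w (e i)) huniv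
    refine ⟨i0, ?_⟩
    rw [hT, Finset.mem_filter]
    exact ⟨Finset.mem_univ i0, fun i' => hmin i' (Finset.mem_univ i')⟩
  have hcard : (initialForm w f).support.card = T.card := by
    rw [support_initialForm, hfilter]
    exact Finset.card_image_of_injOn (fun i _ i' _ h => heinj i i' h)
  have hirr : 2 ≤ (initialForm w f).support.card → Irreducible (initialForm w f) := by
    intro h2
    rw [hinit]
    exact irred_aux S hdisj hne T (hcard ▸ h2)
  refine ⟨hirr, ?_⟩
  intro hno
  have hf0 : f ≠ 0 := by
    intro h
    obtain ⟨i0, hi0⟩ := hTne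
    have := hco Finset.univ i0 (Finset.mem_univ i0)
    rw [← hfe, h, coeff_zero] at this
    exact zero_ne_one this
  have hII : initialIdeal w (Ideal.span {f}) = Ideal.span {initialForm w f} :=
    initialIdeal_span_singleton w f hf0
  have hmemI : initialForm w f ∈ initialIdeal w (Ideal.span {f}) := by
    rw [hII]
    exact Ideal.mem_span_singleton_self _
  have hT2 : 2 ≤ T.card := by
    rcases Nat.lt_or_ge T.card 2 with hlt | hge
    · exfalso
      have hc1 : T.card = 1 := by
        have := Finset.card_pos.mpr hTne
        omega
      obtain ⟨i1, hi1⟩ := Finset.card_eq_one.mp hc1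
      apply hno
      refine ⟨e i1, ?_⟩
      have : initialForm w f = monomial (e i1) (1 : K) := by
        rw [hinit, hi1, Finset.sum_singleton]
      rw [← this]
      exact hmemI
    · exact hge
  have hG : Irreducible (initialForm w f) := hirr (by omega)
  have hG0 : initialForm w f ≠ 0 := initialForm_ne_zero w hf0
  rw [hII]
  rw [Ideal.span_singleton_prime hG0]
  exact hG.prime
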